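/- Let U be a vector space with two compatible left symmetric products • and ∘, i.e., both are left symmetric and the mixed curvature K^{•,∘}(X,Y) = [L^•_X, L^∘_Y] − L^∘_{X•Y} + L^•_{Y∘X} satisfies K^{•,∘}(X,Y)Z = K^{•,∘}(Z,Y)X and K^{•,∘}(X,Y)Z = K^{•,∘}(X,Z)Y for all X,Y,Z. Then for any scalars a,b, the product a•+b∘ (given by X(a•+b∘)Y = a(X•Y)+b(X∘Y)) is left symmetric. -/
import Mathlib


variable {k U : Type*} [Field k] [AddCommGroup U] [Module k U]

/-- The mixed curvature `K^{•,∘}(X,Y) = [L^•_X, L^∘_Y] − L^∘_{X•Y} + L^•_{Y∘X}`. -/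
def mixedCurv (mulA mulB : U →ₗ[k] U →ₗ[k] U) (x y z : U) : U :=
  mulA x (mulB y z) - mulB y (mulA x z) - mulB (mulA x y) z + mulA (mulB y x) z

/-- If `•` and `∘` are compatible left symmetric products, then any linear combination
`a•+b∘` is a left symmetric product. -/
theorem compatible_linearCombination_leftSymmetric
    (mulA mulB : U →ₗ[k] U →ₗ[k] U)
    (hlsA : ∀ u v w : U,
      mulA (mulA u v) w - mulA u (mulA v w) = mulA (mulA v u) w - mulA v (mulA u w))
    (hlsB : ∀ u v w : U,
      mulB (mulB u v) w - mulB u (mulB v w) = mulB (mulB v u) w - mulB v (mulB u w))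
    (hK1 : ∀ x y z : U, mixedCurv mulA mulB x y z = mixedCurv mulA mulB z y x)
    (hK2 : ∀ x y z : U, mixedCurv mulA mulB x y z = mixedCurv mulA mulB x z y)
    (a b : k) (u v w : U) :
    (a • mulA + b • mulB) ((a • mulA + b • mulB) u v) w
        - (a • mulA + b • mulB) u ((a • mulA + b • mulB) v w)
      = (a • mulA + b • mulB) ((a • mulA + b • mulB) v u) w
        - (a • mulA + b • mulB) v ((a • mulA + b • mulB) u w) := by
  have hsym : mixedCurv mulA mulB u v w = mixedCurv mulA mulB v u w := by
    rw [hK1, hK2, hK1]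
  simp only [mixedCurv] at hsym
  simp only [LinearMap.add_apply, LinearMap.smul_apply, map_add, map_smul, smul_add, smul_sub]
  linear_combination (norm := module) (a * a) • hlsA u v w + (b * b) • hlsB u v w
    - (a * b) • hsym
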